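/- Let X be a normed space, let ψ be a norm-one functional attaining its norm at a point x of the unit sphere, and for δ > 0 let S(x,ψ,δ) = {y in the closed unit ball : ψ(y) > 1 − δ}. Then the map δ ↦ diam(S(x,ψ,δ)) is continuous on (0, ∞). -/

import Mathlib

open Metric Set

theorem slice_diam_continuous {X : Type*} [NormedAddCommGroup X] [NormedSpace ℝ X]
    (ψ : X →L[ℝ] ℝ) (x : X) (hψ : ‖ψ‖ = 1) (hx : ‖x‖ = 1) (hψx : ψ x = 1) :
    ContinuousOn (fun δ : ℝ => Metric.diam {y : X | ‖y‖ ≤ 1 ∧ 1 - δ < ψ y})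
      (Set.Ioi (0 : ℝ)) := by
  set S : ℝ → Set X := fun δ => {y : X | ‖y‖ ≤ 1 ∧ 1 - δ < ψ y} with hS
  have hbd : ∀ δ : ℝ, Bornology.IsBounded (S δ) := by
    intro δ
    refine (isBounded_closedBall (x := (0 : X)) (r := 1)).subset ?_
    intro y hy
    simpa [mem_closedBall, dist_eq_norm] using hy.1
  have hmono : ∀ {a b : ℝ}, a ≤ b → S a ⊆ S b := by
    intro a b h y hy
    exact ⟨hy.1, lt_of_le_of_lt (by linarith) hy.2⟩
  have key : ∀ a b : ℝ, 0 < a → a ≤ b →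
      diam (S b) ≤ diam (S a) + 4 * ((b - a) / b) := by
    intro a b ha hab
    have hb : 0 < b := ha.trans_le hab
    set t : ℝ := (b - a) / b with ht
    have ht0 : 0 ≤ t := div_nonneg (by linarith) hb.le
    have ht1 : t < 1 := by rw [div_lt_one hb]; linarith
    have htb : t * b = b - a := by rw [ht]; field_simp
    have map : ∀ w ∈ S b, ((1 - t) • w + t • x ∈ S a) ∧
        dist w ((1 - t) • w + t • x) ≤ 2 * t := by
      intro w hw
      refine ⟨⟨?_, ?_⟩, ?_⟩
      · calc ‖(1 - t) • w + t • x‖ ≤ ‖(1 - t) • w‖ + ‖t • x‖ := norm_add_le _ _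
          _ = (1 - t) * ‖w‖ + t * ‖x‖ := by
              rw [norm_smul, norm_smul, Real.norm_of_nonneg ht0,
                Real.norm_of_nonneg (by linarith)]
          _ ≤ (1 - t) * 1 + t * 1 := by
              gcongr
              · exact hw.1
              · exact hx.le
          _ = 1 := by ring
      · have hval : ψ ((1 - t) • w + t • x) = (1 - t) * ψ w + t := by
          simp [map_add, map_smul, hψx]
        rw [hval]
        have h2 := hw.2
        nlinarith [mul_pos (sub_pos.mpr ht1) (sub_pos.mpr h2)]
      · have heq : w - ((1 - t) • w + t • x) = t • (w - x) := by
          rw [sub_smul, one_smul, smul_sub]; abel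
        rw [dist_eq_norm, heq, norm_smul, Real.norm_of_nonneg ht0]
        calc t * ‖w - x‖ ≤ t * (‖w‖ + ‖x‖) := by
              gcongr; exact norm_sub_le _ _
          _ ≤ t * (1 + 1) := by gcongr; exact hw.1; rw [hx]
          _ = 2 * t := by ring
    apply Metric.diam_le_of_forall_dist_le (by positivity)
    intro y hy z hz
    obtain ⟨hy', hdy⟩ := map y hy
    obtain ⟨hz', hdz⟩ := map z hz
    calc dist y z ≤ dist y ((1 - t) • y + t • x) +
          dist ((1 - t) • y + t • x) ((1 - t) • z + t • x) +
          dist ((1 - t) • z + t • x) z := dist_triangle4 _ _ _ _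
      _ ≤ 2 * t + diam (S a) + 2 * t :=
          add_le_add (add_le_add hdy (dist_le_diam_of_mem (hbd a) hy' hz'))
            (by rw [dist_comm]; exact hdz)
      _ = diam (S a) + 4 * t := by ring
  rw [Metric.continuousOn_iff]
  intro δ₀ hδ₀ ε hε
  rw [Set.mem_Ioi] at hδ₀
  refine ⟨ε * δ₀ / 4, by positivity, ?_⟩
  intro δ hδ hdist
  rw [Set.mem_Ioi] at hδ
  rw [Real.dist_eq] at hdist ⊢
  rcases le_total δ δ₀ with hle | hle
  · have h1 : diam (S δ) ≤ diam (S δ₀) := diam_mono (hmono hle) (hbd δ₀)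
    have h2 : diam (S δ₀) ≤ diam (S δ) + 4 * ((δ₀ - δ) / δ₀) := key δ δ₀ hδ hle
    have habs : |δ - δ₀| = δ₀ - δ := by rw [abs_sub_comm, abs_of_nonneg (by linarith)]
    rw [habs] at hdist
    have : 4 * ((δ₀ - δ) / δ₀) < ε := by
      rw [mul_comm, div_mul_eq_mul_div, div_lt_iff₀ hδ₀]
      nlinarith
    rw [abs_sub_lt_iff]
    constructor <;> linarith
  · have h1 : diam (S δ₀) ≤ diam (S δ) := diam_mono (hmono hle) (hbd δ)
    have h2 : diam (S δ) ≤ diam (S δ₀) + 4 * ((δ - δ₀) / δ) := key δ₀ δ hδ₀ hle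
    have habs : |δ - δ₀| = δ - δ₀ := abs_of_nonneg (by linarith)
    rw [habs] at hdist
    have h3 : (δ - δ₀) / δ ≤ (δ - δ₀) / δ₀ := by
      apply div_le_div_of_nonneg_left (by linarith) hδ₀ hle
    have : 4 * ((δ - δ₀) / δ₀) < ε := by
      rw [mul_comm, div_mul_eq_mul_div, div_lt_iff₀ hδ₀]
      nlinarith
    rw [abs_sub_lt_iff]
    constructor <;> linarith
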